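/- arXiv:1409.7899 — 2 statements merged into one kernel-verified Lean document; each statement's English description precedes it below -/
import Mathlib

section
/- The linear-algebraic data of a maximal isotropic subspace L ⊆ V ⊕ V* with (W ⊕ W⁰) ∩ L = {0} is equivalent to the data of a triple (H, ω, π) where H is a complement of W in V, ω is a skew-symmetric bilinear form on H, and π is a skew-symmetric bilinear form on H⁰: the two constructions (L ↦ (H, ω_H, π_V) and (H,ω,π) ↦ graph decomposition) are mutually inverse bijections. -/
open Module

noncomputable def pairPlus {V : Type*} [AddCommGroup V] [Module ℝ V]
    (p q : V × Module.Dual ℝ V) : ℝ :=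
  (1 / 2) * (p.2 q.1 + q.2 p.1)

def IsIsotropicP {V : Type*} [AddCommGroup V] [Module ℝ V]
    (L : Submodule ℝ (V × Module.Dual ℝ V)) : Prop :=
  ∀ p ∈ L, ∀ q ∈ L, pairPlus p q = 0

def IsMaxIsotropicP {V : Type*} [AddCommGroup V] [Module ℝ V]
    (L : Submodule ℝ (V × Module.Dual ℝ V)) : Prop :=
  IsIsotropicP L ∧ ∀ L' : Submodule ℝ (V × Module.Dual ℝ V),
    IsIsotropicP L' → L ≤ L' → L = L'

/-- The horizontal space `H = {X ∈ V : ∃ α ∈ W⁰, (X,α) ∈ L}` associated with a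
subspace `L ⊆ V ⊕ V*` and a subspace `W ⊆ V`. -/
def horizSub {V : Type*} [AddCommGroup V] [Module ℝ V]
    (L : Submodule ℝ (V × Module.Dual ℝ V)) (W : Submodule ℝ V) :
    Submodule ℝ V where
  carrier := {X | ∃ α ∈ W.dualAnnihilator, (X, α) ∈ L}
  add_mem' := by
    rintro a b ⟨α, hα, hαL⟩ ⟨β, hβ, hβL⟩
    exact ⟨α + β, Submodule.add_mem _ hα hβ, L.add_mem hαL hβL⟩
  zero_mem' := ⟨0, Submodule.zero_mem _, L.zero_mem⟩
  smul_mem' := by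
    rintro c a ⟨α, hα, hαL⟩
    exact ⟨c • α, Submodule.smul_mem _ _ hα, L.smul_mem c hαL⟩

/-- The geometric data associated with a subspace `W ⊆ V`: a complement `H`
of `W`, a skew-symmetric horizontal 2-form `ω` (extended to `V` so that
`ι_X ω ∈ W⁰`), and a skew-symmetric vertical bivector `π` (extended to `V*`
so that it vanishes on `W⁰`). -/
structure GeomTriple (V : Type*) [AddCommGroup V] [Module ℝ V]
    (W : Submodule ℝ V) where
  H : Submodule ℝ V
  compl : IsCompl H W
  ω : V →ₗ[ℝ] V →ₗ[ℝ] ℝ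
  ωskew : ∀ x y, ω x y = -ω y x
  ωW : ∀ x : V, ∀ w ∈ W, ω x w = 0
  π : Module.Dual ℝ V →ₗ[ℝ] Module.Dual ℝ V →ₗ[ℝ] ℝ
  πskew : ∀ a b, π a b = -π b a
  πW : ∀ a : Module.Dual ℝ V, ∀ b ∈ W.dualAnnihilator, π a b = 0

set_option linter.unusedSectionVars false

section c
variable {V : Type*} [AddCommGroup V] [Module ℝ V]

noncomputable def Bf (V : Type*) [AddCommGroup V] [Module ℝ V] :
    LinearMap.BilinForm ℝ (V × Module.Dual ℝ V) :=
  LinearMap.mk₂ ℝ (fun p q => p.2 q.1 + q.2 p.1)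
    (by intro p p' q; simp; ring)
    (by intro c p q; simp; ring)
    (by intro p q q'; simp; ring)
    (by intro c p q; simp; ring)
lemma Bf_apply (p q : V × Module.Dual ℝ V) : Bf V p q = p.2 q.1 + q.2 p.1 := rfl
lemma Bf_symm (p q : V × Module.Dual ℝ V) : Bf V p q = Bf V q p := by
  simp [Bf_apply]; ring
lemma Bf_refl : (Bf V).IsRefl := fun p q h => by rwa [Bf_symm] at h
lemma Bf_nondeg [FiniteDimensional ℝ V] : (Bf V).Nondegenerate := by
  suffices key : (Bf V).SeparatingLeft from
    ⟨key, fun p hp => key p fun q => by rw [Bf_symm]; exact hp q⟩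
  intro p hp
  have h1 : p.2 = 0 := by
    ext Y; simpa [Bf_apply] using hp (Y, 0)
  have h2 : p.1 = 0 := by
    rw [← Module.forall_dual_apply_eq_zero_iff ℝ p.1]
    intro β; simpa [Bf_apply, h1] using hp (0, β)
  exact Prod.ext h2 h1

lemma isIsotropic_iff_Bf {L : Submodule ℝ (V × Module.Dual ℝ V)} :
    IsIsotropicP L ↔ ∀ p ∈ L, ∀ q ∈ L, Bf V p q = 0 := by
  unfold IsIsotropicP pairPlus
  constructor
  · intro h p hp q hq
    have := h p hp q hq
    rw [Bf_apply]; linarith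
  · intro h p hp q hq
    have := h p hp q hq
    rw [Bf_apply] at this
    rw [this]; ring

variable [FiniteDimensional ℝ V]

noncomputable def phiV (V : Type*) [AddCommGroup V] [Module ℝ V] [FiniteDimensional ℝ V] :
    V →ₗ[ℝ] Module.Dual ℝ V :=
  (Module.finBasis ℝ V).toDual

lemma phiV_pos {x : V} (hx : x ≠ 0) : 0 < phiV V x x := by
  classical
  set b := Module.finBasis ℝ V
  have hxx : phiV V x x = ∑ i, b.repr x i * b.repr x i := by
    have : x = ∑ i, b.repr x i • b i := (b.sum_repr x).symm
    calc phiV V x x = phiV V x (∑ i, b.repr x i • b i) := by rw [← this]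
    _ = ∑ i, b.repr x i * (phiV V x (b i)) := by
        rw [map_sum]; simp [smul_eq_mul]
    _ = ∑ i, b.repr x i * b.repr x i := by
        simp [phiV, b, Basis.toDual_apply_left]
  rw [hxx]
  have hne : ∃ i, b.repr x i ≠ 0 := by
    by_contra h
    push_neg at h
    apply hx
    have : b.repr x = 0 := by ext i; exact h i
    simpa using congrArg b.repr.symm this
  obtain ⟨i, hi⟩ := hne
  apply Finset.sum_pos' (fun j _ => mul_self_nonneg _)
  exact ⟨i, Finset.mem_univ i, mul_self_pos.mpr hi⟩

noncomputable def graphPhi (V : Type*) [AddCommGroup V] [Module ℝ V] [FiniteDimensional ℝ V]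
    (s : ℝ) : Submodule ℝ (V × Module.Dual ℝ V) :=
  LinearMap.range (LinearMap.prod LinearMap.id (s • phiV V))

lemma graphPhi_finrank (s : ℝ) :
    finrank ℝ (graphPhi V s) = finrank ℝ V := by
  rw [graphPhi, LinearMap.finrank_range_of_inj]
  intro x y h
  simpa using congrArg Prod.fst h

lemma graphPhi_sign {s : ℝ} (hs : s ≠ 0) {p : V × Module.Dual ℝ V} (hp : p ∈ graphPhi V s)
    (hp0 : p ≠ 0) : 0 < s * Bf V p p := by
  obtain ⟨x, rfl⟩ := hp
  have hx : x ≠ 0 := by rintro rfl; simp at hp0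
  have : Bf V (LinearMap.prod LinearMap.id (s • phiV V) x)
      (LinearMap.prod LinearMap.id (s • phiV V) x) = 2 * (s * phiV V x x) := by
    simp [Bf_apply]; ring
  rw [this]
  have h1 := phiV_pos hx
  have h2 : 0 < s * s := mul_self_pos.mpr hs
  nlinarith

lemma finrank_VD : finrank ℝ (V × Module.Dual ℝ V) = 2 * finrank ℝ V := by
  rw [Module.finrank_prod, Subspace.dual_finrank_eq]; ring

lemma finrank_le_of_sign {L' : Submodule ℝ (V × Module.Dual ℝ V)} {s : ℝ} (hs : s ≠ 0)
    (h : ∀ p ∈ L', 0 ≤ s * Bf V p p) :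
    finrank ℝ L' ≤ finrank ℝ V := by
  have hdisj : L' ⊓ graphPhi V (-s) = ⊥ := by
    rw [Submodule.eq_bot_iff]
    intro p ⟨hp1, hp2⟩
    by_contra hp0
    have := graphPhi_sign (neg_ne_zero.mpr hs) hp2 hp0
    have := h p hp1
    nlinarith
  have := Submodule.finrank_sup_add_finrank_inf_eq L' (graphPhi V (-s))
  rw [hdisj, finrank_bot, add_zero, graphPhi_finrank] at this
  have hle : finrank ℝ ↥(L' ⊔ graphPhi V (-s)) ≤ finrank ℝ (V × Module.Dual ℝ V) :=
    Submodule.finrank_le _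
  rw [finrank_VD] at hle
  omega

lemma isotropic_finrank_le {L : Submodule ℝ (V × Module.Dual ℝ V)}
    (hL : IsIsotropicP L) : finrank ℝ L ≤ finrank ℝ V := by
  refine finrank_le_of_sign one_ne_zero (fun p hp => ?_)
  rw [(isIsotropic_iff_Bf.mp hL) p hp p hp]; norm_num

end c

section m
variable {V : Type*} [AddCommGroup V] [Module ℝ V]

lemma mem_orth_iff {L : Submodule ℝ (V × Module.Dual ℝ V)} {q : V × Module.Dual ℝ V} :
    q ∈ (Bf V).orthogonal L ↔ ∀ p ∈ L, Bf V p q = 0 := Iff.rfl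

lemma exists_isotropic_ext {L : Submodule ℝ (V × Module.Dual ℝ V)}
    (hL : ∀ p ∈ L, ∀ q ∈ L, Bf V p q = 0)
    {u v : V × Module.Dual ℝ V} (hu : u ∈ (Bf V).orthogonal L) (hv : v ∈ (Bf V).orthogonal L)
    (hu2 : 0 < Bf V u u) (hv2 : Bf V v v < 0) :
    ∃ w, w ∉ L ∧ L ≤ L ⊔ (ℝ ∙ w) ∧
      (∀ p ∈ L ⊔ (ℝ ∙ w), ∀ q ∈ L ⊔ (ℝ ∙ w), Bf V p q = 0) := by
  set a := Bf V u u with ha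
  set bq := Bf V u v with hbq
  set c := Bf V v v with hc
  set t : ℝ := (-bq + Real.sqrt (bq ^ 2 - a * c)) / a with ht
  set w := t • u + v with hw
  have hs : Real.sqrt (bq ^ 2 - a * c) ^ 2 = bq ^ 2 - a * c :=
    Real.sq_sqrt (by nlinarith)
  have hww : Bf V w w = 0 := by
    have hexp : Bf V w w = t * t * a + 2 * t * bq + c := by
      simp only [hw, map_add, map_smul, LinearMap.add_apply, LinearMap.smul_apply,
        smul_eq_mul]
      have : Bf V v u = bq := (Bf_symm v u).trans hbq.symm
      rw [this, ← ha, ← hbq, ← hc]; ring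
    rw [hexp, ht]
    have ha0 : a ≠ 0 := ne_of_gt hu2
    field_simp
    nlinarith
  have hworth : w ∈ (Bf V).orthogonal L :=
    Submodule.add_mem _ (Submodule.smul_mem _ _ hu) hv
  have hwnot : w ∉ L := by
    intro hwL
    have h1 : Bf V w u = 0 := hu w hwL
    have h2 : Bf V u w = 0 := Bf_refl _ _ h1
    have hvv : Bf V v v = t * t * a := by
      have hv' : v = w - t • u := by rw [hw]; abel
      rw [hv']
      simp only [map_sub, map_smul, LinearMap.sub_apply, LinearMap.smul_apply, smul_eq_mul]
      rw [h2, hww, ← ha, h1]; ring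
    nlinarith [mul_self_nonneg t]
  refine ⟨w, hwnot, le_sup_left, ?_⟩
  intro p hp q hq
  rw [Submodule.mem_sup] at hp hq
  obtain ⟨l, hl, x, hx, rfl⟩ := hp
  obtain ⟨l', hl', y, hy, rfl⟩ := hq
  rw [Submodule.mem_span_singleton] at hx hy
  obtain ⟨r, rfl⟩ := hx
  obtain ⟨r', rfl⟩ := hy
  have e1 : Bf V l l' = 0 := hL l hl l' hl'
  have e2 : Bf V l w = 0 := hworth l hl
  have e3 : Bf V w l' = 0 := Bf_refl _ _ (hworth l' hl')
  simp only [map_add, map_smul, LinearMap.add_apply, LinearMap.smul_apply, smul_eq_mul]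
  rw [e1, e2, e3, hww]; ring

variable [FiniteDimensional ℝ V]

lemma finrank_orth (L : Submodule ℝ (V × Module.Dual ℝ V)) :
    finrank ℝ ((Bf V).orthogonal L) = 2 * finrank ℝ V - finrank ℝ L := by
  rw [LinearMap.BilinForm.finrank_orthogonal Bf_nondeg, finrank_VD]

lemma maxIsotropic_finrank {L : Submodule ℝ (V × Module.Dual ℝ V)}
    (hL : IsMaxIsotropicP L) : finrank ℝ L = finrank ℝ V := by
  have hiso := isIsotropic_iff_Bf.mp hL.1
  refine le_antisymm (isotropic_finrank_le hL.1) ?_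
  have hLbound : finrank ℝ L ≤ finrank ℝ V := isotropic_finrank_le hL.1
  by_cases h1 : ∀ p ∈ (Bf V).orthogonal L, 0 ≤ Bf V p p
  · have := finrank_le_of_sign one_ne_zero
      (L' := (Bf V).orthogonal L) (by simpa using h1)
    have h2 := finrank_orth L
    omega
  by_cases h2 : ∀ p ∈ (Bf V).orthogonal L, 0 ≤ (-1 : ℝ) * Bf V p p
  · have := finrank_le_of_sign (neg_ne_zero.mpr one_ne_zero)
      (L' := (Bf V).orthogonal L) h2
    have h3 := finrank_orth L
    omega
  exfalso
  push_neg at h1 h2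
  obtain ⟨v, hv, hv2⟩ := h1
  obtain ⟨u, hu, hu2⟩ := h2
  have hu2' : 0 < Bf V u u := by nlinarith
  obtain ⟨w, hw, hle, hiso'⟩ := exists_isotropic_ext hiso hu hv hu2' hv2
  have := hL.2 _ (isIsotropic_iff_Bf.mpr hiso') hle
  exact hw (this ▸ Submodule.mem_sup_right (Submodule.mem_span_singleton_self w))

lemma maxIsotropic_orth_eq {L : Submodule ℝ (V × Module.Dual ℝ V)}
    (hL : IsMaxIsotropicP L) : (Bf V).orthogonal L = L := by
  have hle : L ≤ (Bf V).orthogonal L := fun p hp q hq =>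
    (isIsotropic_iff_Bf.mp hL.1) q hq p hp
  refine (Submodule.eq_of_le_of_finrank_le hle ?_).symm
  rw [finrank_orth, maxIsotropic_finrank hL]
  omega

lemma isotropic_isMax_of_finrank {L : Submodule ℝ (V × Module.Dual ℝ V)}
    (hiso : IsIsotropicP L) (hr : finrank ℝ L = finrank ℝ V) : IsMaxIsotropicP L := by
  refine ⟨hiso, fun L' h' hle => Submodule.eq_of_le_of_finrank_le hle ?_⟩
  rw [hr]
  exact isotropic_finrank_le h'

lemma orth_sup (p q : Submodule ℝ (V × Module.Dual ℝ V)) :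
    (Bf V).orthogonal (p ⊔ q) = (Bf V).orthogonal p ⊓ (Bf V).orthogonal q := by
  ext m
  simp only [Submodule.mem_inf, mem_orth_iff]
  constructor
  · intro h
    exact ⟨fun n hn => h n (Submodule.mem_sup_left hn),
           fun n hn => h n (Submodule.mem_sup_right hn)⟩
  · rintro ⟨h1, h2⟩ n hn
    rw [Submodule.mem_sup] at hn
    obtain ⟨y, hy, z, hz, rfl⟩ := hn
    have := h1 y hy
    have := h2 z hz
    simp only [map_add, LinearMap.add_apply]
    rw [h1 y hy, h2 z hz, add_zero]

end m


section h
variable {V : Type*} [AddCommGroup V] [Module ℝ V]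


lemma orth_Wprodbot (W : Submodule ℝ V) :
    (Bf V).orthogonal (W.prod ⊥) = (⊤ : Submodule ℝ V).prod W.dualAnnihilator := by
  ext p
  rw [mem_orth_iff]
  simp only [Submodule.mem_prod, Submodule.mem_top, true_and,
    Submodule.mem_dualAnnihilator]
  constructor
  · intro h w hw
    have := h (w, 0) (by simp [Submodule.mem_prod, hw])
    simpa [Bf_apply] using this
  · rintro h ⟨x, α⟩ hx
    obtain ⟨hx1, hx2⟩ := hx
    have hα : α = 0 := hx2
    rw [Bf_apply]
    simp [hα, h x hx1]

lemma orth_botprodann [FiniteDimensional ℝ V] (W : Submodule ℝ V) :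
    (Bf V).orthogonal ((⊥ : Submodule ℝ V).prod W.dualAnnihilator)
      = W.prod (⊤ : Submodule ℝ (Module.Dual ℝ V)) := by
  ext p
  rw [mem_orth_iff]
  simp only [Submodule.mem_prod, Submodule.mem_top, and_true]
  constructor
  · intro h
    rw [← Subspace.forall_mem_dualAnnihilator_apply_eq_zero_iff]
    intro γ hγ
    have := h (0, γ) (by simp [Submodule.mem_prod, hγ])
    simpa [Bf_apply] using this
  · rintro h ⟨x, γ⟩ hx
    obtain ⟨hx1, hx2⟩ := hx
    have hx1' : x = 0 := hx1
    rw [Bf_apply, hx1']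
    have := (Submodule.mem_dualAnnihilator γ).mp hx2 p.1 h
    simp [this]

variable [FiniteDimensional ℝ V]

lemma finrank_ann (W : Submodule ℝ V) :
    finrank ℝ W.dualAnnihilator = finrank ℝ V - finrank ℝ W := by
  have h1 : finrank ℝ (V ⧸ W) = finrank ℝ W.dualAnnihilator :=
    LinearEquiv.finrank_eq (Subspace.quotEquivAnnihilator W)
  have h2 := Submodule.finrank_quotient_add_finrank W
  omega

/-- finrank of a product of submodules -/
lemma finrank_prodsub {N : Type*} [AddCommGroup N] [Module ℝ N] [FiniteDimensional ℝ N]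
    (p : Submodule ℝ V) (q : Submodule ℝ N) :
    finrank ℝ (p.prod q) = finrank ℝ p + finrank ℝ q := by
  have e : ↥(p.prod q) ≃ₗ[ℝ] ↥p × ↥q :=
    { toFun := fun z => (⟨z.1.1, z.2.1⟩, ⟨z.1.2, z.2.2⟩)
      invFun := fun z => ⟨(z.1.1, z.2.1), ⟨z.1.2, z.2.2⟩⟩
      left_inv := fun z => rfl
      right_inv := fun z => rfl
      map_add' := fun x y => rfl
      map_smul' := fun c x => rfl }
  rw [LinearEquiv.finrank_eq e, Module.finrank_prod]

lemma finrank_map_of_injOn {N : Type*} [AddCommGroup N] [Module ℝ N]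
    (f : V →ₗ[ℝ] N) (A : Submodule ℝ V) [FiniteDimensional ℝ A]
    (h : ∀ x ∈ A, f x = 0 → x = 0) :
    finrank ℝ (A.map f) = finrank ℝ A := by
  have : A.map f = LinearMap.range (f ∘ₗ A.subtype) := by
    rw [LinearMap.range_comp, Submodule.range_subtype]
  rw [this, LinearMap.finrank_range_of_inj]
  intro x y hxy
  have hmem : ((x : V) - y) ∈ A := Submodule.sub_mem A x.2 y.2
  have : f ((x : V) - y) = 0 := by
    rw [map_sub]
    simpa [sub_eq_zero] using hxy
  have := h _ hmem this
  exact Subtype.ext (sub_eq_zero.mp this)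
end h


section Forward
variable {V : Type*} [AddCommGroup V] [Module ℝ V] [FiniteDimensional ℝ V]

lemma mem_horizSub {W : Submodule ℝ V} {L : Submodule ℝ (V × Module.Dual ℝ V)} {X : V} :
    X ∈ horizSub L W ↔ ∃ α ∈ W.dualAnnihilator, (X, α) ∈ L := Iff.rfl

variable {W : Submodule ℝ V} {L : Submodule ℝ (V × Module.Dual ℝ V)}

lemma trans_elem (htr : W.prod W.dualAnnihilator ⊓ L = ⊥) {X : V} {α : Module.Dual ℝ V}
    (hX : X ∈ W) (hα : α ∈ W.dualAnnihilator) (hmem : (X, α) ∈ L) : X = 0 ∧ α = 0 := by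
  have h : (X, α) ∈ W.prod W.dualAnnihilator ⊓ L := ⟨⟨hX, hα⟩, hmem⟩
  rw [htr, Submodule.mem_bot, Prod.mk_eq_zero] at h
  exact h

/-- `A = L ∩ (V × W⁰)` -/
def subA (W : Submodule ℝ V) (L : Submodule ℝ (V × Module.Dual ℝ V)) :
    Submodule ℝ (V × Module.Dual ℝ V) :=
  L ⊓ ((⊤ : Submodule ℝ V).prod W.dualAnnihilator)

/-- `B = L ∩ (W × V*)` -/
def subB (W : Submodule ℝ V) (L : Submodule ℝ (V × Module.Dual ℝ V)) :
    Submodule ℝ (V × Module.Dual ℝ V) :=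
  L ⊓ (W.prod (⊤ : Submodule ℝ (Module.Dual ℝ V)))

lemma subA_finrank (hmax : IsMaxIsotropicP L) (htr : W.prod W.dualAnnihilator ⊓ L = ⊥) :
    finrank ℝ (subA W L) = finrank ℝ V - finrank ℝ W := by
  have hA : subA W L = (Bf V).orthogonal (W.prod ⊥ ⊔ L) := by
    rw [orth_sup, orth_Wprodbot, maxIsotropic_orth_eq hmax, subA, inf_comm]
  have hinf : (W.prod (⊥ : Submodule ℝ (Module.Dual ℝ V))) ⊓ L = ⊥ := by
    rw [eq_bot_iff, ← htr]
    exact inf_le_inf (Submodule.prod_mono le_rfl bot_le) le_rfl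
  have hsum := Submodule.finrank_sup_add_finrank_inf_eq
    (W.prod (⊥ : Submodule ℝ (Module.Dual ℝ V))) L
  rw [hinf, finrank_bot, add_zero] at hsum
  have h1 : finrank ℝ (W.prod (⊥ : Submodule ℝ (Module.Dual ℝ V))) = finrank ℝ W := by
    rw [finrank_prodsub, finrank_bot, add_zero]
  rw [hA, finrank_orth]
  rw [h1, maxIsotropic_finrank hmax] at hsum
  have hW : finrank ℝ W ≤ finrank ℝ V := Submodule.finrank_le W
  omega

lemma subB_finrank (hmax : IsMaxIsotropicP L) (htr : W.prod W.dualAnnihilator ⊓ L = ⊥) :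
    finrank ℝ (subB W L) = finrank ℝ W := by
  have hB : subB W L = (Bf V).orthogonal
      ((⊥ : Submodule ℝ V).prod W.dualAnnihilator ⊔ L) := by
    rw [orth_sup, orth_botprodann, maxIsotropic_orth_eq hmax, subB, inf_comm]
  have hinf : ((⊥ : Submodule ℝ V).prod W.dualAnnihilator) ⊓ L = ⊥ := by
    rw [eq_bot_iff, ← htr]
    exact inf_le_inf (Submodule.prod_mono bot_le le_rfl) le_rfl
  have hsum := Submodule.finrank_sup_add_finrank_inf_eq
    ((⊥ : Submodule ℝ V).prod W.dualAnnihilator) L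
  rw [hinf, finrank_bot, add_zero] at hsum
  have h1 : finrank ℝ ((⊥ : Submodule ℝ V).prod W.dualAnnihilator)
      = finrank ℝ V - finrank ℝ W := by
    rw [finrank_prodsub, finrank_bot, zero_add, finrank_ann]
  rw [hB, finrank_orth]
  rw [h1, maxIsotropic_finrank hmax] at hsum
  have hW : finrank ℝ W ≤ finrank ℝ V := Submodule.finrank_le W
  omega

/-- first projection restricted to `A` -/
noncomputable def gA (W : Submodule ℝ V) (L : Submodule ℝ (V × Module.Dual ℝ V)) :
    ↥(subA W L) →ₗ[ℝ] V :=
  (LinearMap.fst ℝ V (Module.Dual ℝ V)) ∘ₗ (subA W L).subtype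

/-- second projection restricted to `B` -/
noncomputable def gB (W : Submodule ℝ V) (L : Submodule ℝ (V × Module.Dual ℝ V)) :
    ↥(subB W L) →ₗ[ℝ] Module.Dual ℝ V :=
  (LinearMap.snd ℝ V (Module.Dual ℝ V)) ∘ₗ (subB W L).subtype

lemma gA_inj (htr : W.prod W.dualAnnihilator ⊓ L = ⊥) :
    Function.Injective (gA W L) := by
  rw [← LinearMap.ker_eq_bot (M := ↥(subA W L))]
  rw [Submodule.eq_bot_iff]
  rintro ⟨⟨X, α⟩, hmem⟩ hker
  have hX : X = 0 := hker
  obtain ⟨hL, -, hα⟩ : (X, α) ∈ L ∧ X ∈ (⊤ : Submodule ℝ V) ∧ α ∈ W.dualAnnihilator := by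
    exact ⟨hmem.1, hmem.2.1, hmem.2.2⟩
  subst hX
  have := (trans_elem htr (Submodule.zero_mem W) hα hL).2
  subst this
  rfl

lemma gB_inj (htr : W.prod W.dualAnnihilator ⊓ L = ⊥) :
    Function.Injective (gB W L) := by
  rw [← LinearMap.ker_eq_bot (M := ↥(subB W L))]
  rw [Submodule.eq_bot_iff]
  rintro ⟨⟨X, α⟩, hmem⟩ hker
  have hα : α = 0 := hker
  obtain ⟨hL, hX, -⟩ : (X, α) ∈ L ∧ X ∈ W ∧ α ∈ (⊤ : Submodule ℝ (Module.Dual ℝ V)) := by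
    exact ⟨hmem.1, hmem.2.1, hmem.2.2⟩
  subst hα
  have := (trans_elem htr hX (Submodule.zero_mem _) hL).1
  subst this
  rfl

lemma range_gA : LinearMap.range (gA W L) = horizSub L W := by
  ext X
  simp only [gA, LinearMap.range_comp, Submodule.range_subtype, Submodule.mem_map,
    mem_horizSub]
  constructor
  · rintro ⟨⟨Y, α⟩, ⟨hL, -, hα⟩, rfl⟩
    exact ⟨α, hα, hL⟩
  · rintro ⟨α, hα, hL⟩
    exact ⟨(X, α), ⟨hL, trivial, hα⟩, rfl⟩

/-- the vertical dual range `C = pr₂(L ∩ (W × V*))` -/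
noncomputable def subC (W : Submodule ℝ V) (L : Submodule ℝ (V × Module.Dual ℝ V)) :
    Submodule ℝ (Module.Dual ℝ V) :=
  LinearMap.range (gB W L)

lemma mem_subC {α : Module.Dual ℝ V} :
    α ∈ subC W L ↔ ∃ X ∈ W, (X, α) ∈ L := by
  simp only [subC, gB, LinearMap.range_comp, Submodule.range_subtype, Submodule.mem_map]
  constructor
  · rintro ⟨⟨Y, β⟩, ⟨hL, hY, -⟩, rfl⟩
    exact ⟨Y, hY, hL⟩
  · rintro ⟨X, hX, hL⟩
    exact ⟨(X, α), ⟨hL, hX, trivial⟩, rfl⟩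

lemma horiz_finrank (hmax : IsMaxIsotropicP L) (htr : W.prod W.dualAnnihilator ⊓ L = ⊥) :
    finrank ℝ (horizSub L W) = finrank ℝ V - finrank ℝ W := by
  rw [← range_gA, LinearMap.finrank_range_of_inj (gA_inj htr), subA_finrank hmax htr]

lemma subC_finrank (hmax : IsMaxIsotropicP L) (htr : W.prod W.dualAnnihilator ⊓ L = ⊥) :
    finrank ℝ (subC W L) = finrank ℝ W := by
  rw [subC, LinearMap.finrank_range_of_inj (gB_inj htr), subB_finrank hmax htr]

lemma horiz_isCompl (hmax : IsMaxIsotropicP L) (htr : W.prod W.dualAnnihilator ⊓ L = ⊥) :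
    IsCompl (horizSub L W) W := by
  have hinf : horizSub L W ⊓ W = ⊥ := by
    rw [Submodule.eq_bot_iff]
    rintro X ⟨hX, hXW⟩
    obtain ⟨α, hα, hL⟩ := mem_horizSub.mp hX
    exact (trans_elem htr hXW hα hL).1
  have hsum := Submodule.finrank_sup_add_finrank_inf_eq (horizSub L W) W
  rw [hinf, finrank_bot, add_zero, horiz_finrank hmax htr] at hsum
  have hW : finrank ℝ W ≤ finrank ℝ V := Submodule.finrank_le W
  rw [isCompl_iff]
  constructor
  · exact disjoint_iff.mpr hinf
  · rw [codisjoint_iff]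
    apply Submodule.eq_top_of_finrank_eq
    omega

lemma subC_isCompl (hmax : IsMaxIsotropicP L) (htr : W.prod W.dualAnnihilator ⊓ L = ⊥) :
    IsCompl (subC W L) W.dualAnnihilator := by
  have hinf : subC W L ⊓ W.dualAnnihilator = ⊥ := by
    rw [Submodule.eq_bot_iff]
    rintro α ⟨hα, hαW⟩
    obtain ⟨X, hX, hL⟩ := mem_subC.mp hα
    exact (trans_elem htr hX hαW hL).2
  have hsum := Submodule.finrank_sup_add_finrank_inf_eq (subC W L) W.dualAnnihilator
  rw [hinf, finrank_bot, add_zero, subC_finrank hmax htr, finrank_ann] at hsum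
  have hW : finrank ℝ W ≤ finrank ℝ V := Submodule.finrank_le W
  rw [isCompl_iff]
  constructor
  · exact disjoint_iff.mpr hinf
  · rw [codisjoint_iff]
    apply Submodule.eq_top_of_finrank_eq
    rw [Subspace.dual_finrank_eq]
    omega

end Forward


section ProjHelpers
variable {E : Type*} [AddCommGroup E] [Module ℝ E] {p q : Submodule ℝ E}

lemma sub_proj_mem (h : IsCompl p q) (x : E) :
    x - ↑(Submodule.linearProjOfIsCompl p q h x) ∈ q := by
  have hx : x ∈ p ⊔ q := by rw [h.sup_eq_top]; trivial
  rw [Submodule.mem_sup] at hx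
  obtain ⟨u, hu, v, hv, rfl⟩ := hx
  rw [map_add]
  have h1 : Submodule.linearProjOfIsCompl p q h u = ⟨u, hu⟩ :=
    Submodule.linearProjOfIsCompl_apply_left h ⟨u, hu⟩
  have h2 : Submodule.linearProjOfIsCompl p q h v = 0 :=
    Submodule.projectionOnto_apply_of_mem_right h hv
  rw [h1, h2]
  simpa using hv

lemma proj_eq_of (h : IsCompl p q) {x y : E} (hy : y ∈ p) (hxy : x - y ∈ q) :
    ↑(Submodule.linearProjOfIsCompl p q h x) = y := by
  have hx : x = y + (x - y) := by abel
  rw [hx, map_add]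
  have h1 : Submodule.linearProjOfIsCompl p q h y = ⟨y, hy⟩ :=
    Submodule.linearProjOfIsCompl_apply_left h ⟨y, hy⟩
  have h2 : Submodule.linearProjOfIsCompl p q h (x - y) = 0 :=
    Submodule.projectionOnto_apply_of_mem_right h hxy
  rw [h1, h2]
  simp

end ProjHelpers

section Forward2
variable {V : Type*} [AddCommGroup V] [Module ℝ V] [FiniteDimensional ℝ V]
variable {W : Submodule ℝ V} {L : Submodule ℝ (V × Module.Dual ℝ V)}

variable (hmax : IsMaxIsotropicP L) (htr : W.prod W.dualAnnihilator ⊓ L = ⊥)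

/-- projection of `V` onto `H` along `W` -/
noncomputable def pH : V →ₗ[ℝ] V :=
  (horizSub L W).subtype ∘ₗ
    Submodule.linearProjOfIsCompl _ _ (horiz_isCompl hmax htr)

/-- projection of `V*` onto `C` along `W⁰` -/
noncomputable def pC : Module.Dual ℝ V →ₗ[ℝ] Module.Dual ℝ V :=
  (subC W L).subtype ∘ₗ
    Submodule.linearProjOfIsCompl _ _ (subC_isCompl hmax htr)

noncomputable def eA : ↥(subA W L) ≃ₗ[ℝ] ↥(LinearMap.range (gA W L)) :=
  LinearEquiv.ofInjective _ (gA_inj htr)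

noncomputable def eB : ↥(subB W L) ≃ₗ[ℝ] ↥(subC W L) :=
  LinearEquiv.ofInjective _ (gB_inj htr)

/-- the horizontal 2-form of `L` -/
noncomputable def fwdω : V →ₗ[ℝ] Module.Dual ℝ V :=
  ((LinearMap.snd ℝ V (Module.Dual ℝ V)) ∘ₗ (subA W L).subtype) ∘ₗ
    ((eA htr).symm.toLinearMap ∘ₗ
      ((LinearEquiv.ofEq _ _ range_gA.symm).toLinearMap ∘ₗ
        Submodule.linearProjOfIsCompl _ _ (horiz_isCompl hmax htr)))

/-- the vertical bivector (as a map `V* → V`) of `L` -/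
noncomputable def fwdπvec : Module.Dual ℝ V →ₗ[ℝ] V :=
  ((LinearMap.fst ℝ V (Module.Dual ℝ V)) ∘ₗ (subB W L).subtype) ∘ₗ
    ((eB htr).symm.toLinearMap ∘ₗ
      Submodule.linearProjOfIsCompl _ _ (subC_isCompl hmax htr))

lemma gA_eA_symm (y : ↥(LinearMap.range (gA W L))) :
    gA W L ((eA htr).symm y) = ↑y := by
  conv_rhs => rw [← (eA htr).apply_symm_apply y]
  rfl

lemma gB_eB_symm (y : ↥(subC W L)) :
    gB W L ((eB htr).symm y) = ↑y := by
  conv_rhs => rw [← (eB htr).apply_symm_apply y]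
  rfl

lemma fwdω_spec (X : V) :
    (pH hmax htr X, fwdω hmax htr X) ∈ L ∧ fwdω hmax htr X ∈ W.dualAnnihilator := by
  set pr := Submodule.linearProjOfIsCompl _ _ (horiz_isCompl hmax htr) X with hpr
  set z : ↥(subA W L) := (eA htr).symm ((LinearEquiv.ofEq _ _ range_gA.symm) pr) with hz
  have h2 : (↑z : V × Module.Dual ℝ V).1 = pH hmax htr X := by
    have := gA_eA_symm htr ((LinearEquiv.ofEq _ _ range_gA.symm) pr)
    rw [show gA W L z = (↑z : V × Module.Dual ℝ V).1 from rfl] at this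
    rw [this]
    rfl
  have h1 : fwdω hmax htr X = (↑z : V × Module.Dual ℝ V).2 := rfl
  have hzz : (↑z : V × Module.Dual ℝ V) ∈ subA W L := z.2
  obtain ⟨hL, -, hα⟩ : (↑z : V × Module.Dual ℝ V) ∈ L ∧
      (↑z : V × Module.Dual ℝ V).1 ∈ (⊤ : Submodule ℝ V) ∧
      (↑z : V × Module.Dual ℝ V).2 ∈ W.dualAnnihilator := ⟨hzz.1, hzz.2.1, hzz.2.2⟩
  constructor
  · have : (pH hmax htr X, fwdω hmax htr X) = (↑z : V × Module.Dual ℝ V) := by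
      rw [h1, ← h2]
    rw [this]; exact hL
  · rw [h1]; exact hα

lemma fwdπvec_spec (α : Module.Dual ℝ V) :
    (fwdπvec hmax htr α, pC hmax htr α) ∈ L ∧ fwdπvec hmax htr α ∈ W := by
  set pr := Submodule.linearProjOfIsCompl _ _ (subC_isCompl hmax htr) α with hpr
  set z : ↥(subB W L) := (eB htr).symm pr with hz
  have h2 : (↑z : V × Module.Dual ℝ V).2 = pC hmax htr α := by
    have := gB_eB_symm htr pr
    rw [show gB W L z = (↑z : V × Module.Dual ℝ V).2 from rfl] at this
    rw [this]
    rfl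
  have h1 : fwdπvec hmax htr α = (↑z : V × Module.Dual ℝ V).1 := rfl
  have hzz : (↑z : V × Module.Dual ℝ V) ∈ subB W L := z.2
  obtain ⟨hL, hX, -⟩ : (↑z : V × Module.Dual ℝ V) ∈ L ∧
      (↑z : V × Module.Dual ℝ V).1 ∈ W ∧
      (↑z : V × Module.Dual ℝ V).2 ∈ (⊤ : Submodule ℝ (Module.Dual ℝ V)) :=
    ⟨hzz.1, hzz.2.1, hzz.2.2⟩
  constructor
  · have : (fwdπvec hmax htr α, pC hmax htr α) = (↑z : V × Module.Dual ℝ V) := by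
      rw [h1, ← h2]
    rw [this]; exact hL
  · rw [h1]; exact hX

lemma pH_sub_mem (X : V) : X - pH hmax htr X ∈ W :=
  sub_proj_mem (horiz_isCompl hmax htr) X

lemma pC_sub_mem (α : Module.Dual ℝ V) : α - pC hmax htr α ∈ W.dualAnnihilator :=
  sub_proj_mem (subC_isCompl hmax htr) α

lemma fwdω_uniq {X Y : V} {β : Module.Dual ℝ V}
    (hY : (Y, β) ∈ L) (hβ : β ∈ W.dualAnnihilator) (hXY : X - Y ∈ W) :
    pH hmax htr X = Y ∧ fwdω hmax htr X = β := by
  have hYH : Y ∈ horizSub L W := ⟨β, hβ, hY⟩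
  have h1 : pH hmax htr X = Y := proj_eq_of (horiz_isCompl hmax htr) hYH hXY
  refine ⟨h1, ?_⟩
  obtain ⟨hmem, hω⟩ := fwdω_spec hmax htr X
  rw [h1] at hmem
  have hd : ((0 : V), fwdω hmax htr X - β) ∈ L := by
    have := Submodule.sub_mem L hmem hY
    simpa using this
  have := (trans_elem htr (Submodule.zero_mem W) (Submodule.sub_mem _ hω hβ) hd).2
  exact sub_eq_zero.mp this

lemma fwdπvec_uniq {α β : Module.Dual ℝ V} {Y : V}
    (hY : (Y, β) ∈ L) (hYW : Y ∈ W) (hαβ : α - β ∈ W.dualAnnihilator) :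
    fwdπvec hmax htr α = Y ∧ pC hmax htr α = β := by
  have hβC : β ∈ subC W L := mem_subC.mpr ⟨Y, hYW, hY⟩
  have h1 : pC hmax htr α = β := proj_eq_of (subC_isCompl hmax htr) hβC hαβ
  obtain ⟨hmem, hπ⟩ := fwdπvec_spec hmax htr α
  rw [h1] at hmem
  have hd : (fwdπvec hmax htr α - Y, (0 : Module.Dual ℝ V)) ∈ L := by
    have := Submodule.sub_mem L hmem hY
    simpa using this
  have := (trans_elem htr (Submodule.sub_mem _ hπ hYW)
    (Submodule.zero_mem _) hd).1
  exact ⟨sub_eq_zero.mp this, h1⟩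

end Forward2


section Forward3
variable {V : Type*} [AddCommGroup V] [Module ℝ V] [FiniteDimensional ℝ V]
variable {W : Submodule ℝ V} {L : Submodule ℝ (V × Module.Dual ℝ V)}
variable (hmax : IsMaxIsotropicP L) (htr : W.prod W.dualAnnihilator ⊓ L = ⊥)

/-- the bivector as a bilinear form on `V*` -/
noncomputable def fwdπ : Module.Dual ℝ V →ₗ[ℝ] Module.Dual ℝ V →ₗ[ℝ] ℝ :=
  ((Module.Dual.eval ℝ V) ∘ₗ fwdπvec hmax htr).flip

lemma fwdπ_apply (β α : Module.Dual ℝ V) :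
    fwdπ hmax htr β α = β (fwdπvec hmax htr α) := rfl

lemma fwdω_eq {X : V} {α : Module.Dual ℝ V} (hα : α ∈ W.dualAnnihilator)
    (hmem : (X, α) ∈ L) : fwdω hmax htr X = α :=
  (fwdω_uniq hmax htr hmem hα (by simp [sub_self, Submodule.zero_mem])).2

lemma fwdπvec_eq {X : V} {α : Module.Dual ℝ V} (hX : X ∈ W)
    (hmem : (X, α) ∈ L) : fwdπvec hmax htr α = X :=
  (fwdπvec_uniq hmax htr hmem hX (by simp [sub_self, Submodule.zero_mem])).1

/-- the geometric triple associated with a maximal isotropic `L` transverse to `W ⊕ W⁰`. -/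
noncomputable def fwdTriple : GeomTriple V W where
  H := horizSub L W
  compl := horiz_isCompl hmax htr
  ω := fwdω hmax htr
  ωskew := by
    intro X Y
    have sX := fwdω_spec hmax htr X
    have sY := fwdω_spec hmax htr Y
    have hiso := isIsotropic_iff_Bf.mp hmax.1 _ sX.1 _ sY.1
    rw [Bf_apply] at hiso
    have e1 : fwdω hmax htr X Y = fwdω hmax htr X (pH hmax htr Y) := by
      have h2 : fwdω hmax htr X (Y - pH hmax htr Y) = 0 :=
        (Submodule.mem_dualAnnihilator _).mp sX.2 _ (pH_sub_mem hmax htr Y)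
      rw [map_sub] at h2
      linarith
    have e2 : fwdω hmax htr Y X = fwdω hmax htr Y (pH hmax htr X) := by
      have h2 : fwdω hmax htr Y (X - pH hmax htr X) = 0 :=
        (Submodule.mem_dualAnnihilator _).mp sY.2 _ (pH_sub_mem hmax htr X)
      rw [map_sub] at h2
      linarith
    simp only [e1, e2]
    linarith [hiso]
  ωW := fun X w hw => (Submodule.mem_dualAnnihilator _).mp (fwdω_spec hmax htr X).2 w hw
  π := fwdπ hmax htr
  πskew := by
    intro a b
    have sa := fwdπvec_spec hmax htr a
    have sb := fwdπvec_spec hmax htr b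
    have hiso := isIsotropic_iff_Bf.mp hmax.1 _ sa.1 _ sb.1
    rw [Bf_apply] at hiso
    have e1 : a (fwdπvec hmax htr b) = pC hmax htr a (fwdπvec hmax htr b) := by
      have h2 : (a - pC hmax htr a) (fwdπvec hmax htr b) = 0 :=
        (Submodule.mem_dualAnnihilator _).mp (pC_sub_mem hmax htr a) _ sb.2
      rw [LinearMap.sub_apply] at h2
      linarith
    have e2 : b (fwdπvec hmax htr a) = pC hmax htr b (fwdπvec hmax htr a) := by
      have h2 : (b - pC hmax htr b) (fwdπvec hmax htr a) = 0 :=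
        (Submodule.mem_dualAnnihilator _).mp (pC_sub_mem hmax htr b) _ sa.2
      rw [LinearMap.sub_apply] at h2
      linarith
    rw [fwdπ_apply, fwdπ_apply, e1, e2]
    linarith [hiso]
  πW := by
    intro a b hb
    have h0 : fwdπvec hmax htr b = 0 :=
      (fwdπvec_uniq hmax htr (Submodule.zero_mem L) (Submodule.zero_mem W)
        (by simpa using hb)).1
    rw [fwdπ_apply, h0, map_zero]

end Forward3


section Backward
variable {V : Type*} [AddCommGroup V] [Module ℝ V] [FiniteDimensional ℝ V]
variable {W : Submodule ℝ V}

noncomputable def πsharp (d : GeomTriple V W) : Module.Dual ℝ V →ₗ[ℝ] V :=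
  (Module.evalEquiv ℝ V).symm.toLinearMap ∘ₗ d.π.flip

lemma πsharp_apply (d : GeomTriple V W) (α β : Module.Dual ℝ V) :
    β (πsharp d α) = d.π β α := by
  simp [πsharp, Module.apply_evalEquiv_symm_apply]

lemma πsharp_mem_W (d : GeomTriple V W) (α : Module.Dual ℝ V) : πsharp d α ∈ W := by
  rw [← Subspace.forall_mem_dualAnnihilator_apply_eq_zero_iff]
  intro γ hγ
  rw [πsharp_apply, d.πskew, d.πW α γ hγ]
  ring

lemma ann_inf_bot (d : GeomTriple V W) :
    W.dualAnnihilator ⊓ d.H.dualAnnihilator = ⊥ := by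
  rw [← Submodule.dualAnnihilator_sup_eq]
  have h : W ⊔ d.H = ⊤ := by
    rw [sup_comm]
    exact d.compl.codisjoint.eq_top
  rw [h, Submodule.dualAnnihilator_top]

lemma ωmem (d : GeomTriple V W) (X : V) : d.ω X ∈ W.dualAnnihilator :=
  (Submodule.mem_dualAnnihilator _).mpr (fun w hw => d.ωW X w hw)

lemma ω_vanish_W (d : GeomTriple V W) {w : V} (hw : w ∈ W) : d.ω w = 0 := by
  ext y
  rw [d.ωskew]
  simp [d.ωW y w hw]

noncomputable def Phi (d : GeomTriple V W) :
    (V × Module.Dual ℝ V) →ₗ[ℝ] (V × Module.Dual ℝ V) :=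
  LinearMap.prod
    ((LinearMap.fst ℝ V (Module.Dual ℝ V)) + πsharp d ∘ₗ (LinearMap.snd ℝ V (Module.Dual ℝ V)))
    (d.ω ∘ₗ (LinearMap.fst ℝ V (Module.Dual ℝ V)) + (LinearMap.snd ℝ V (Module.Dual ℝ V)))

lemma Phi_apply (d : GeomTriple V W) (X : V) (α : Module.Dual ℝ V) :
    Phi d (X, α) = (X + πsharp d α, d.ω X + α) := rfl

noncomputable def Ldown (d : GeomTriple V W) : Submodule ℝ (V × Module.Dual ℝ V) :=
  Submodule.map (Phi d) (d.H.prod d.H.dualAnnihilator)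

lemma mem_Ldown {d : GeomTriple V W} {p : V × Module.Dual ℝ V} :
    p ∈ Ldown d ↔ ∃ X ∈ d.H, ∃ α ∈ d.H.dualAnnihilator,
      p = (X + πsharp d α, d.ω X + α) := by
  simp only [Ldown, Submodule.mem_map]
  constructor
  · rintro ⟨⟨X, α⟩, ⟨h1, h2⟩, rfl⟩
    exact ⟨X, h1, α, h2, (Phi_apply d X α).symm⟩
  · rintro ⟨X, h1, α, h2, rfl⟩
    exact ⟨(X, α), ⟨h1, h2⟩, rfl⟩

lemma Ldown_iso (d : GeomTriple V W) : IsIsotropicP (Ldown d) := by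
  rw [isIsotropic_iff_Bf]
  intro p hp q hq
  obtain ⟨X, hX, α, hα, rfl⟩ := mem_Ldown.mp hp
  obtain ⟨Y, hY, β, hβ, rfl⟩ := mem_Ldown.mp hq
  rw [Bf_apply]
  simp only [LinearMap.add_apply, map_add]
  have h1 : d.ω X (πsharp d β) = 0 := d.ωW _ _ (πsharp_mem_W d β)
  have h2 : d.ω Y (πsharp d α) = 0 := d.ωW _ _ (πsharp_mem_W d α)
  have h3 : α Y = 0 := (Submodule.mem_dualAnnihilator _).mp hα Y hY
  have h4 : β X = 0 := (Submodule.mem_dualAnnihilator _).mp hβ X hX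
  have h5 : α (πsharp d β) + β (πsharp d α) = 0 := by
    rw [πsharp_apply, πsharp_apply]
    have := d.πskew α β
    linarith
  have h6 : d.ω X Y + d.ω Y X = 0 := by
    have := d.ωskew X Y
    linarith
  linarith

lemma Ldown_finrank (d : GeomTriple V W) :
    finrank ℝ (Ldown d) = finrank ℝ V := by
  rw [Ldown, finrank_map_of_injOn, finrank_prodsub, finrank_ann]
  · have := Submodule.finrank_le d.H
    omega
  · rintro ⟨X, α⟩ ⟨hX, hα⟩ h0
    rw [Phi_apply, Prod.ext_iff] at h0
    obtain ⟨h01, h02⟩ := h0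
    have hα2 : α ∈ W.dualAnnihilator := by
      have h02' : d.ω X + α = 0 := by simpa using h02
      have : α = -(d.ω X) := eq_neg_of_add_eq_zero_right h02'
      rw [this]
      exact Submodule.neg_mem _ (ωmem d X)
    have hα0 : α = 0 := by
      have : α ∈ W.dualAnnihilator ⊓ d.H.dualAnnihilator := ⟨hα2, hα⟩
      rwa [ann_inf_bot d, Submodule.mem_bot] at this
    subst hα0
    have hX0 : X = 0 := by
      have := h01
      simpa using this
    simp [hX0]

lemma Ldown_max (d : GeomTriple V W) : IsMaxIsotropicP (Ldown d) :=
  isotropic_isMax_of_finrank (Ldown_iso d) (Ldown_finrank d)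

lemma Ldown_trans (d : GeomTriple V W) :
    W.prod W.dualAnnihilator ⊓ Ldown d = ⊥ := by
  rw [Submodule.eq_bot_iff]
  rintro ⟨w, γ⟩ ⟨⟨hw, hγ⟩, hmem⟩
  obtain ⟨X, hX, α, hα, heq⟩ := mem_Ldown.mp hmem
  rw [Prod.ext_iff] at heq
  obtain ⟨h1, h2⟩ := heq
  simp only at h1 h2
  have hXW : X ∈ W := by
    have : X = w - πsharp d α := by rw [h1]; abel
    rw [this]
    exact Submodule.sub_mem _ hw (πsharp_mem_W d α)
  have hX0 : X = 0 := by
    have : X ∈ d.H ⊓ W := ⟨hX, hXW⟩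
    rwa [d.compl.inf_eq_bot, Submodule.mem_bot] at this
  subst hX0
  have hγα : γ = α := by
    rw [h2]
    simp
  have hα0 : α = 0 := by
    have : α ∈ W.dualAnnihilator ⊓ d.H.dualAnnihilator := ⟨hγα ▸ hγ, hα⟩
    rwa [ann_inf_bot d, Submodule.mem_bot] at this
  subst hα0
  have hw0 : w = 0 := by
    rw [h1]
    simp
  rw [Prod.mk_eq_zero]
  exact ⟨hw0, hγα⟩

end Backward


section Inverses
variable {V : Type*} [AddCommGroup V] [Module ℝ V] [FiniteDimensional ℝ V]
variable {W : Submodule ℝ V} {L : Submodule ℝ (V × Module.Dual ℝ V)}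
variable (hmax : IsMaxIsotropicP L) (htr : W.prod W.dualAnnihilator ⊓ L = ⊥)

include hmax htr in
lemma subC_eq_annH : subC W L = (horizSub L W).dualAnnihilator := by
  apply Submodule.eq_of_le_of_finrank_le
  · intro α hα
    obtain ⟨X, hXW, hL⟩ := mem_subC.mp hα
    rw [Submodule.mem_dualAnnihilator]
    intro Y hY
    obtain ⟨β, hβ, hYL⟩ := mem_horizSub.mp hY
    have hiso := isIsotropic_iff_Bf.mp hmax.1 _ hL _ hYL
    rw [Bf_apply] at hiso
    have hβX : β X = 0 := (Submodule.mem_dualAnnihilator _).mp hβ X hXW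
    simp only at hiso
    linarith
  · rw [finrank_ann, horiz_finrank hmax htr, subC_finrank hmax htr]
    have := Submodule.finrank_le W
    omega

lemma πsharp_fwd (α : Module.Dual ℝ V) :
    πsharp (fwdTriple hmax htr) α = fwdπvec hmax htr α := by
  have h : (fwdTriple hmax htr).π.flip α
      = Module.evalEquiv ℝ V (fwdπvec hmax htr α) := by
    ext β
    simp only [LinearMap.flip_apply, Module.evalEquiv_apply, Module.Dual.eval_apply]
    exact fwdπ_apply hmax htr β α
  show (Module.evalEquiv ℝ V).symm ((fwdTriple hmax htr).π.flip α) = _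
  rw [h, LinearEquiv.symm_apply_apply]

lemma fwdω_mem_of_H {X : V} (hX : X ∈ horizSub L W) :
    (X, fwdω hmax htr X) ∈ L := by
  obtain ⟨β, hβ, hL⟩ := mem_horizSub.mp hX
  rw [fwdω_eq hmax htr hβ hL]
  exact hL

lemma Ldown_fwd : Ldown (fwdTriple hmax htr) = L := by
  apply (Ldown_max (fwdTriple hmax htr)).2 L hmax.1
  intro p hp
  obtain ⟨X, hX, α, hα, rfl⟩ := mem_Ldown.mp hp
  have h1 : (X, fwdω hmax htr X) ∈ L := fwdω_mem_of_H hmax htr hX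
  have hαC : α ∈ subC W L := by
    rw [subC_eq_annH hmax htr]
    exact hα
  obtain ⟨X', hX'W, hL'⟩ := mem_subC.mp hαC
  have h2 : fwdπvec hmax htr α = X' := fwdπvec_eq hmax htr hX'W hL'
  have h3 : (πsharp (fwdTriple hmax htr) α, α) ∈ L := by
    rw [πsharp_fwd hmax htr, h2]
    exact hL'
  exact Submodule.add_mem L h1 h3

lemma GeomTriple.ext' {d1 d2 : GeomTriple V W} (hH : d1.H = d2.H)
    (hω : d1.ω = d2.ω) (hπ : d1.π = d2.π) : d1 = d2 := by
  cases d1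
  cases d2
  dsimp at hH hω hπ
  subst hH
  subst hω
  subst hπ
  rfl

lemma fwd_Ldown (d : GeomTriple V W) :
    fwdTriple (Ldown_max d) (Ldown_trans d) = d := by
  have hH : horizSub (Ldown d) W = d.H := by
    ext X
    rw [mem_horizSub]
    constructor
    · rintro ⟨γ, hγ, hmem⟩
      obtain ⟨Y, hY, α, hα, heq⟩ := mem_Ldown.mp hmem
      rw [Prod.ext_iff] at heq
      obtain ⟨h1, h2⟩ := heq
      simp only at h1 h2
      have hα2 : α ∈ W.dualAnnihilator := by
        have hs : α = γ - d.ω Y := by rw [h2]; abel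
        rw [hs]
        exact Submodule.sub_mem _ hγ (ωmem d Y)
      have hα0 : α = 0 := by
        have hm : α ∈ W.dualAnnihilator ⊓ d.H.dualAnnihilator := ⟨hα2, hα⟩
        rwa [ann_inf_bot d, Submodule.mem_bot] at hm
      subst hα0
      have : X = Y := by rw [h1]; simp
      rw [this]
      exact hY
    · intro hX
      exact ⟨d.ω X, ωmem d X, mem_Ldown.mpr ⟨X, hX, 0, Submodule.zero_mem _, by simp⟩⟩
  apply GeomTriple.ext'
  · exact hH
  · apply LinearMap.ext
    intro X
    set Y : V := ↑(Submodule.linearProjOfIsCompl d.H W d.compl X) with hYdef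
    have hYH : Y ∈ d.H := (Submodule.linearProjOfIsCompl d.H W d.compl X).2
    have hXY : X - Y ∈ W := sub_proj_mem d.compl X
    have hmem : (Y, d.ω Y) ∈ Ldown d :=
      mem_Ldown.mpr ⟨Y, hYH, 0, Submodule.zero_mem _, by simp⟩
    have h := (fwdω_uniq (Ldown_max d) (Ldown_trans d) hmem (ωmem d Y) hXY).2
    show fwdω (Ldown_max d) (Ldown_trans d) X = d.ω X
    rw [h]
    have hv : d.ω (X - Y) = 0 := ω_vanish_W d hXY
    rw [map_sub] at hv
    exact (sub_eq_zero.mp hv).symm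
  · apply LinearMap.ext
    intro β
    apply LinearMap.ext
    intro α
    have hcompl : IsCompl d.H.dualAnnihilator W.dualAnnihilator := by
      rw [isCompl_iff]
      constructor
      · exact disjoint_iff.mpr (by rw [inf_comm]; exact ann_inf_bot d)
      · rw [codisjoint_iff, ← Subspace.dualAnnihilator_inf_eq, d.compl.inf_eq_bot,
          Submodule.dualAnnihilator_bot]
    set a : Module.Dual ℝ V := ↑(Submodule.linearProjOfIsCompl _ _ hcompl α) with hadef
    have haH : a ∈ d.H.dualAnnihilator := (Submodule.linearProjOfIsCompl _ _ hcompl α).2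
    have hγ : α - a ∈ W.dualAnnihilator := sub_proj_mem hcompl α
    have hmem : (πsharp d a, a) ∈ Ldown d :=
      mem_Ldown.mpr ⟨0, Submodule.zero_mem _, a, haH, by simp⟩
    have h1 := (fwdπvec_uniq (Ldown_max d) (Ldown_trans d) hmem (πsharp_mem_W d a) hγ).1
    show fwdπ (Ldown_max d) (Ldown_trans d) β α = d.π β α
    rw [fwdπ_apply, h1, πsharp_apply]
    have hv : d.π β (α - a) = 0 := d.πW β _ hγ
    rw [map_sub] at hv
    linarith

/-- the main equivalence -/
noncomputable def mainEquiv (W : Submodule ℝ V) :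
    {L : Submodule ℝ (V × Module.Dual ℝ V) //
      IsMaxIsotropicP L ∧ W.prod W.dualAnnihilator ⊓ L = ⊥} ≃ GeomTriple V W where
  toFun L := fwdTriple L.2.1 L.2.2
  invFun d := ⟨Ldown d, Ldown_max d, Ldown_trans d⟩
  left_inv L := Subtype.ext (Ldown_fwd L.2.1 L.2.2)
  right_inv d := fwd_Ldown d

end Inverses


/-- Maximal isotropic subspaces `L ⊆ V ⊕ V*` with `(W ⊕ W⁰) ∩ L = 0` are in
bijective correspondence with triples `(H, ω, π)`, where the bijection and its
inverse are given by the natural constructions: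
`H = {X : ∃ α ∈ W⁰, (X,α) ∈ L}`, `ω(X,·) =` the unique `α ∈ W⁰` with
`(X,α) ∈ L`, `π(α₁,α₂) = α₁(X₂)` for the unique `X₂ ∈ W` with `(X₂,α₂) ∈ L`,
and conversely `L = {(X + π♯(α), ι_X ω + α) : X ∈ H, α ∈ H⁰}`. -/
theorem geometric_data_correspondence
    {V : Type*} [AddCommGroup V] [Module ℝ V] [FiniteDimensional ℝ V]
    (W : Submodule ℝ V) :
    ∃ e : {L : Submodule ℝ (V × Module.Dual ℝ V) //
        IsMaxIsotropicP L ∧ W.prod W.dualAnnihilator ⊓ L = ⊥} ≃ GeomTriple V W,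
      (∀ L, ((e L).H : Set V) =
        {X | ∃ α ∈ W.dualAnnihilator, (X, α) ∈ L.1}) ∧
      (∀ L (X : V) (α : Module.Dual ℝ V),
        α ∈ W.dualAnnihilator → (X, α) ∈ L.1 → (e L).ω X = α) ∧
      (∀ L (X : V) (α β : Module.Dual ℝ V),
        X ∈ W → (X, α) ∈ L.1 → (e L).π β α = β X) ∧
      (∀ d : GeomTriple V W, ((e.symm d).1 : Set (V × Module.Dual ℝ V)) =
        {p | ∃ X ∈ d.H, ∃ α ∈ d.H.dualAnnihilator,
          p = (X + (Module.evalEquiv ℝ V).symm (d.π.flip α), d.ω X + α)}) := by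
  refine ⟨mainEquiv W, ?_, ?_, ?_, ?_⟩
  · intro L
    rfl
  · intro L X α hα hmem
    exact fwdω_eq L.2.1 L.2.2 hα hmem
  · intro L X α β hX hmem
    show fwdπ L.2.1 L.2.2 β α = β X
    rw [fwdπ_apply, fwdπvec_eq L.2.1 L.2.2 hX hmem]
  · intro d
    ext p
    show p ∈ Ldown d ↔ _
    rw [mem_Ldown]
    simp only [Set.mem_setOf_eq]
    rfl
end

section
/- If L ⊆ V ⊕ V* is maximal isotropic with (W ⊕ W⁰) ∩ L = {0}, where (V, W) corresponds to (tangent space, vertical space), then the associated vertical bivector π_V is nondegenerate on H⁰ if and only if L is the graph of a skew-symmetric bilinear form ω on V whose restriction to W is nondegenerate; in that case the restriction of ω to W equals the inverse of π_V under the identification H⁰ ≅ W*. -/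
open Module

section Aux

variable {V : Type*} [AddCommGroup V] [Module ℝ V]

lemma isoPair {L : Submodule ℝ (V × Module.Dual ℝ V)} (h : IsIsotropicP L)
    {p q : V × Module.Dual ℝ V} (hp : p ∈ L) (hq : q ∈ L) :
    p.2 q.1 + q.2 p.1 = 0 := by
  have hh := h p hp q hq
  unfold pairPlus at hh
  linarith

lemma mem_of_orth {L : Submodule ℝ (V × Module.Dual ℝ V)} (hL : IsMaxIsotropicP L)
    (v : V × Module.Dual ℝ V) (hv : v.2 v.1 = 0)
    (horth : ∀ q ∈ L, v.2 q.1 + q.2 v.1 = 0) : v ∈ L := by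
  have hiso : IsIsotropicP (L ⊔ ℝ ∙ v) := by
    intro p hp q hq
    rw [Submodule.mem_sup] at hp hq
    obtain ⟨l, hl, sv, hsv, rfl⟩ := hp
    obtain ⟨l', hl', sv', hsv', rfl⟩ := hq
    rw [Submodule.mem_span_singleton] at hsv hsv'
    obtain ⟨c, rfl⟩ := hsv
    obtain ⟨c', rfl⟩ := hsv'
    have h1 := isoPair hL.1 hl hl'
    have h2 := horth l hl
    have h3 := horth l' hl'
    unfold pairPlus
    simp only [Prod.fst_add, Prod.snd_add, Prod.smul_fst, Prod.smul_snd,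
      LinearMap.add_apply, LinearMap.smul_apply, map_add, map_smul, smul_eq_mul]
    linear_combination (1/2 : ℝ) * h1 + (c'/2) * h2 + (c/2) * h3 + (c*c') * hv
  have := hL.2 _ hiso le_sup_left
  rw [this]
  exact Submodule.mem_sup_right (Submodule.mem_span_singleton_self v)

lemma zero_snd_mem_iff {L : Submodule ℝ (V × Module.Dual ℝ V)} (hL : IsMaxIsotropicP L)
    (β : Module.Dual ℝ V) :
    ((0 : V), β) ∈ L ↔ ∀ p ∈ L, β p.1 = 0 := by
  constructor
  · intro h p hp
    have := isoPair hL.1 h hp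
    simpa using this
  · intro h
    refine mem_of_orth hL _ (by simp) ?_
    intro q hq
    simpa using h q hq

/-- A submodule product is equivalent to the product of submodules. -/
def prodSubEquiv {M N : Type*} [AddCommGroup M] [Module ℝ M] [AddCommGroup N] [Module ℝ N]
    (p : Submodule ℝ M) (q : Submodule ℝ N) : (p.prod q) ≃ₗ[ℝ] p × q where
  toFun x := (⟨x.1.1, x.2.1⟩, ⟨x.1.2, x.2.2⟩)
  invFun y := ⟨(y.1.1, y.2.1), ⟨y.1.2, y.2.2⟩⟩
  map_add' _ _ := rfl
  map_smul' _ _ := rfl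
  left_inv _ := rfl
  right_inv _ := rfl

lemma finrank_prod_sub {M N : Type*} [AddCommGroup M] [Module ℝ M] [AddCommGroup N] [Module ℝ N]
    (p : Submodule ℝ M) (q : Submodule ℝ N) [Module.Finite ℝ p] [Module.Finite ℝ q] :
    finrank ℝ (p.prod q) = finrank ℝ p + finrank ℝ q := by
  rw [LinearEquiv.finrank_eq (prodSubEquiv p q), Module.finrank_prod]

lemma finrank_annih [FiniteDimensional ℝ V] (U : Submodule ℝ V) :
    finrank ℝ U + finrank ℝ U.dualAnnihilator = finrank ℝ V := by
  have h := Submodule.finrank_quotient_add_finrank U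
  have h2 : finrank ℝ (V ⧸ U) = finrank ℝ U.dualAnnihilator :=
    LinearEquiv.finrank_eq (Subspace.quotEquivAnnihilator U)
  omega

lemma finrank_map_add_inf_ker {P Q : Type*} [AddCommGroup P] [Module ℝ P]
    [AddCommGroup Q] [Module ℝ Q] [FiniteDimensional ℝ P]
    (f : P →ₗ[ℝ] Q) (p : Submodule ℝ P) :
    finrank ℝ (p.map f) + finrank ℝ (p ⊓ LinearMap.ker f : Submodule ℝ P) = finrank ℝ p := by
  have h := LinearMap.finrank_range_add_finrank_ker (f.comp p.subtype)
  rw [LinearMap.range_comp, Submodule.range_subtype, LinearMap.ker_comp] at h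
  have e1 : Submodule.comap p.subtype (LinearMap.ker f)
      = Submodule.comap p.subtype (p ⊓ LinearMap.ker f) := by
    rw [Submodule.comap_inf, Submodule.comap_subtype_self, top_inf_eq]
  have h2 : finrank ℝ (Submodule.comap p.subtype (p ⊓ LinearMap.ker f))
      = finrank ℝ (p ⊓ LinearMap.ker f : Submodule ℝ P) :=
    LinearEquiv.finrank_eq (Submodule.comapSubtypeEquivOfLe inf_le_left)
  rw [e1, h2] at h
  exact h

end Aux

section Core

variable {V : Type*} [AddCommGroup V] [Module ℝ V] [FiniteDimensional ℝ V]
variable {L : Submodule ℝ (V × Module.Dual ℝ V)} {W : Submodule ℝ V}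

lemma finrank_L (hL : IsMaxIsotropicP L) : finrank ℝ L = finrank ℝ V := by
  let F := LinearMap.fst ℝ V (Module.Dual ℝ V)
  have hker : L ⊓ LinearMap.ker F = (⊥ : Submodule ℝ V).prod (L.map F).dualAnnihilator := by
    ext p
    simp only [Submodule.mem_inf, LinearMap.mem_ker, Submodule.mem_prod,
      Submodule.mem_bot, Submodule.mem_dualAnnihilator]
    constructor
    · rintro ⟨hpL, hp1⟩
      refine ⟨hp1, fun x hx => ?_⟩
      obtain ⟨q, hq, rfl⟩ := hx
      have := isoPair hL.1 hpL hq
      rw [show p.1 = 0 from hp1] at this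
      exact (by simpa using this : p.2 q.1 = 0)
    · rintro ⟨hp1, hp2⟩
      have : ((0 : V), p.2) ∈ L := by
        rw [zero_snd_mem_iff hL]
        intro q hq
        exact hp2 q.1 ⟨q, hq, rfl⟩
      have hpe : p = ((0 : V), p.2) := by
        ext
        · exact hp1
        · rfl
      rw [hpe]
      exact ⟨this, rfl⟩
  have h1 := finrank_map_add_inf_ker F L
  rw [hker, finrank_prod_sub] at h1
  have h2 := finrank_annih (L.map F)
  simp only [finrank_bot] at h1
  omega

lemma sup_WL_eq_top (hL : IsMaxIsotropicP L)
    (hnd : W.prod W.dualAnnihilator ⊓ L = ⊥) :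
    W.prod W.dualAnnihilator ⊔ L = ⊤ := by
  apply Submodule.eq_top_of_finrank_eq
  have h1 := Submodule.finrank_sup_add_finrank_inf_eq (W.prod W.dualAnnihilator) L
  rw [hnd] at h1
  simp only [finrank_bot, add_zero] at h1
  rw [finrank_prod_sub] at h1
  have h2 := finrank_annih W
  have h3 := finrank_L hL
  have h4 : finrank ℝ (V × Module.Dual ℝ V) = finrank ℝ V + finrank ℝ V := by
    rw [Module.finrank_prod, Subspace.dual_finrank_eq]
  omega

lemma horiz_eq_map :
    horizSub L W = (L ⊓ (⊤ : Submodule ℝ V).prod W.dualAnnihilator).map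
      (LinearMap.fst ℝ V (Module.Dual ℝ V)) := by
  ext X
  constructor
  · rintro ⟨α, hα, hαL⟩
    exact ⟨(X, α), ⟨hαL, ⟨Submodule.mem_top, hα⟩⟩, rfl⟩
  · rintro ⟨p, ⟨hpL, ⟨-, hp2⟩⟩, rfl⟩
    exact ⟨p.2, hp2, hpL⟩

lemma inf_WH_eq_bot (hnd : W.prod W.dualAnnihilator ⊓ L = ⊥) :
    W ⊓ horizSub L W = ⊥ := by
  rw [Submodule.eq_bot_iff]
  rintro x ⟨hxW, α, hα, hαL⟩
  have : ((x, α) : V × Module.Dual ℝ V) ∈ W.prod W.dualAnnihilator ⊓ L := ⟨⟨hxW, hα⟩, hαL⟩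
  rw [hnd, Submodule.mem_bot] at this
  exact congrArg Prod.fst this

lemma sup_WH_eq_top (hL : IsMaxIsotropicP L)
    (hnd : W.prod W.dualAnnihilator ⊓ L = ⊥) :
    W ⊔ horizSub L W = ⊤ := by
  apply Submodule.eq_top_of_finrank_eq
  set M := (⊤ : Submodule ℝ V).prod W.dualAnnihilator with hM
  -- finrank of L ⊓ M
  have h1 := Submodule.finrank_sup_add_finrank_inf_eq L M
  have h2 : finrank ℝ M = finrank ℝ V + finrank ℝ W.dualAnnihilator := by
    rw [hM, finrank_prod_sub, finrank_top]
  have h3 : finrank ℝ (L ⊔ M : Submodule ℝ (V × Module.Dual ℝ V))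
      ≤ finrank ℝ V + finrank ℝ V := by
    have := Submodule.finrank_le (L ⊔ M)
    rwa [Module.finrank_prod, Subspace.dual_finrank_eq] at this
  have h4 := finrank_L hL
  have h5 := finrank_annih W
  -- finrank H = finrank (L ⊓ M)
  have h6 := finrank_map_add_inf_ker (LinearMap.fst ℝ V (Module.Dual ℝ V)) (L ⊓ M)
  have h7 : (L ⊓ M) ⊓ LinearMap.ker (LinearMap.fst ℝ V (Module.Dual ℝ V))
      = (⊥ : Submodule ℝ (V × Module.Dual ℝ V)) := by
    rw [Submodule.eq_bot_iff]
    rintro p ⟨⟨hpL, -, hp2⟩, hp1⟩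
    have hp1' : p.1 = 0 := hp1
    have : p ∈ W.prod W.dualAnnihilator ⊓ L := ⟨⟨by rw [hp1']; exact W.zero_mem, hp2⟩, hpL⟩
    rwa [hnd, Submodule.mem_bot] at this
  rw [h7, finrank_bot, ← horiz_eq_map, add_zero] at h6
  -- finrank (W ⊔ H)
  have h8 := Submodule.finrank_sup_add_finrank_inf_eq W (horizSub L W)
  rw [inf_WH_eq_bot hnd, finrank_bot, add_zero] at h8
  have h9 := Submodule.finrank_le (W ⊔ horizSub L W)
  omega

lemma eq_zero_of_ann_W_H (hL : IsMaxIsotropicP L)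
    (hnd : W.prod W.dualAnnihilator ⊓ L = ⊥) {α : Module.Dual ℝ V}
    (hW : α ∈ W.dualAnnihilator) (hH : α ∈ (horizSub L W).dualAnnihilator) :
    α = 0 := by
  have : α ∈ (W ⊔ horizSub L W).dualAnnihilator := by
    rw [Submodule.dualAnnihilator_sup_eq]
    exact ⟨hW, hH⟩
  rwa [sup_WH_eq_top hL hnd, Submodule.dualAnnihilator_top, Submodule.mem_bot] at this

lemma exists_W_pair (hL : IsMaxIsotropicP L)
    (hnd : W.prod W.dualAnnihilator ⊓ L = ⊥) {α : Module.Dual ℝ V}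
    (hα : α ∈ (horizSub L W).dualAnnihilator) :
    ∃ X ∈ W, ((X, α) : V × Module.Dual ℝ V) ∈ L := by
  have hmem : ((0 : V), α) ∈ W.prod W.dualAnnihilator ⊔ L := by
    rw [sup_WL_eq_top hL hnd]; trivial
  obtain ⟨m, hm, l, hl, hml⟩ := Submodule.mem_sup.mp hmem
  obtain ⟨hm1, hm2⟩ := hm
  have h1 : l.1 = -m.1 := by
    have := congrArg Prod.fst hml
    simp only [Prod.fst_add] at this
    linear_combination (norm := module) this
  have h2 : l.2 = α - m.2 := by
    have := congrArg Prod.snd hml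
    simp only [Prod.snd_add] at this
    linear_combination (norm := module) this
  have hm2H : m.2 ∈ (horizSub L W).dualAnnihilator := by
    rw [Submodule.mem_dualAnnihilator]
    rintro Y ⟨γ, hγ, hYL⟩
    have hiso := isoPair hL.1 hl hYL
    rw [h1, h2] at hiso
    have hγm : γ m.1 = 0 := (Submodule.mem_dualAnnihilator γ).mp hγ m.1 hm1
    have hαY : α Y = 0 := (Submodule.mem_dualAnnihilator α).mp hα Y ⟨γ, hγ, hYL⟩
    simp only [map_neg, LinearMap.sub_apply] at hiso
    rw [hαY, hγm] at hiso
    linarith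
  have hm20 : m.2 = 0 := eq_zero_of_ann_W_H hL hnd hm2 hm2H
  refine ⟨-m.1, W.neg_mem hm1, ?_⟩
  have : l = ((-m.1 : V), α) := by
    ext
    · exact h1
    · rw [h2, hm20, sub_zero]
  rwa [this] at hl

end Core

section Main2

variable {V : Type*} [AddCommGroup V] [Module ℝ V] [FiniteDimensional ℝ V]
variable {L : Submodule ℝ (V × Module.Dual ℝ V)} {W : Submodule ℝ V}

omit [FiniteDimensional ℝ V] in
lemma omega_mem_annH {ω : V →ₗ[ℝ] V →ₗ[ℝ] ℝ} (hskew : ∀ x y, ω x y = -ω y x)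
    (hgraph : (L : Set (V × Module.Dual ℝ V)) = {p | p.2 = ω p.1}) {w : V} (hw : w ∈ W) :
    ω w ∈ (horizSub L W).dualAnnihilator := by
  rw [Submodule.mem_dualAnnihilator]
  rintro X ⟨γ, hγ, hXL⟩
  have hXset : ((X, γ) : V × Module.Dual ℝ V) ∈ {p : V × Module.Dual ℝ V | p.2 = ω p.1} := by
    rw [← hgraph]; exact hXL
  have hγ' : γ = ω X := hXset
  have hz : ω X w = 0 := by
    rw [← hγ']
    exact (Submodule.mem_dualAnnihilator γ).mp hγ w hw
  rw [hskew w X, hz, neg_zero]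


lemma exists_graph_map (hL : IsMaxIsotropicP L)
    (hker0 : ∀ β : Module.Dual ℝ V, ((0 : V), β) ∈ L → β = 0) :
    ∃ ω : V →ₗ[ℝ] Module.Dual ℝ V, ∀ x : V, ((x, ω x) : V × Module.Dual ℝ V) ∈ L := by
  have hinj : Function.Injective
      ((LinearMap.fst ℝ V (Module.Dual ℝ V)).comp L.subtype) := by
    intro a b hab
    have hab' : (a : V × Module.Dual ℝ V).1 = (b : V × Module.Dual ℝ V).1 := hab
    have hd : ((0 : V), (a : V × Module.Dual ℝ V).2 - (b : V × Module.Dual ℝ V).2) ∈ L := by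
      have hs := L.sub_mem a.2 b.2
      have heq : ((a : V × Module.Dual ℝ V) - (b : V × Module.Dual ℝ V))
          = ((0 : V), (a : V × Module.Dual ℝ V).2 - (b : V × Module.Dual ℝ V).2) :=
        Prod.ext_iff.mpr ⟨by simpa [sub_eq_zero] using hab', rfl⟩
      rwa [heq] at hs
    exact Subtype.ext (Prod.ext_iff.mpr ⟨hab', sub_eq_zero.mp (hker0 _ hd)⟩)
  have hsurj : Function.Surjective
      ((LinearMap.fst ℝ V (Module.Dual ℝ V)).comp L.subtype) := by
    rw [← LinearMap.range_eq_top, LinearMap.range_comp, Submodule.range_subtype]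
    apply Submodule.eq_top_of_finrank_eq
    have h := finrank_map_add_inf_ker (LinearMap.fst ℝ V (Module.Dual ℝ V)) L
    have hbot : L ⊓ LinearMap.ker (LinearMap.fst ℝ V (Module.Dual ℝ V)) = ⊥ := by
      rw [Submodule.eq_bot_iff]
      rintro p ⟨hpL, hp1⟩
      have hp1' : p.1 = 0 := hp1
      have hz : ((0 : V), p.2) ∈ L := by
        rwa [show p = ((0 : V), p.2) from Prod.ext_iff.mpr ⟨hp1', rfl⟩] at hpL
      exact Prod.ext_iff.mpr ⟨hp1', hker0 _ hz⟩
    rw [hbot] at h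
    simp only [finrank_bot, add_zero] at h
    rw [h, finrank_L hL]
  refine ⟨(LinearMap.snd ℝ V (Module.Dual ℝ V)).comp (L.subtype.comp
    (LinearEquiv.ofBijective _ ⟨hinj, hsurj⟩).symm.toLinearMap), fun x => ?_⟩
  have h1 : ((LinearMap.fst ℝ V (Module.Dual ℝ V)).comp L.subtype)
      ((LinearEquiv.ofBijective _ ⟨hinj, hsurj⟩).symm x) = x :=
    (LinearEquiv.ofBijective _ ⟨hinj, hsurj⟩).apply_symm_apply x
  have h2 := ((LinearEquiv.ofBijective
    ((LinearMap.fst ℝ V (Module.Dual ℝ V)).comp L.subtype) ⟨hinj, hsurj⟩).symm x).2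
  have h3 : ((x, (LinearMap.snd ℝ V (Module.Dual ℝ V)).comp (L.subtype.comp
        (LinearEquiv.ofBijective _ ⟨hinj, hsurj⟩).symm.toLinearMap) x) : V × Module.Dual ℝ V)
      = (((LinearEquiv.ofBijective ((LinearMap.fst ℝ V (Module.Dual ℝ V)).comp L.subtype)
        ⟨hinj, hsurj⟩).symm x : L) : V × Module.Dual ℝ V) :=
    Prod.ext_iff.mpr ⟨h1.symm, rfl⟩
  rw [h3]
  exact h2


end Main2

/-- Let `L` be maximal isotropic with `(W ⊕ W⁰) ∩ L = 0` and let `π_V` be the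
associated vertical bivector on `H⁰` (characterized by `π_V(α₁,α₂) = α₁(X₂)`
for the unique `X₂ ∈ W` with `(X₂,α₂) ∈ L`).  Then `π_V` is nondegenerate on
`H⁰` iff `L` is the graph of a skew-symmetric bilinear form `ω` on `V` whose
restriction to `W` is nondegenerate; and in that case the restriction of `ω`
to `W` is the inverse of `π_V`, i.e. `π_V(α, ι_w ω) = α(w)`. -/
theorem vertical_nondegenerate_iff_graph_of_form
    {V : Type*} [AddCommGroup V] [Module ℝ V] [FiniteDimensional ℝ V]
    (L : Submodule ℝ (V × Module.Dual ℝ V)) (W : Submodule ℝ V)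
    (hL : IsMaxIsotropicP L)
    (hnd : W.prod W.dualAnnihilator ⊓ L = ⊥)
    (πV : Module.Dual ℝ V →ₗ[ℝ] Module.Dual ℝ V →ₗ[ℝ] ℝ)
    (hπV : ∀ (α₁ α₂ : Module.Dual ℝ V) (X₂ : V),
      α₁ ∈ (horizSub L W).dualAnnihilator →
      α₂ ∈ (horizSub L W).dualAnnihilator →
      X₂ ∈ W → (X₂, α₂) ∈ L → πV α₁ α₂ = α₁ X₂) :
    ((∀ α ∈ (horizSub L W).dualAnnihilator,
        (∀ β ∈ (horizSub L W).dualAnnihilator, πV α β = 0) → α = 0) ↔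
      (∃ ω : V →ₗ[ℝ] V →ₗ[ℝ] ℝ,
        (∀ x y, ω x y = -ω y x) ∧
        ((L : Set (V × Module.Dual ℝ V)) = {p | p.2 = ω p.1}) ∧
        (∀ w ∈ W, (∀ w' ∈ W, ω w w' = 0) → w = 0))) ∧
    (∀ ω : V →ₗ[ℝ] V →ₗ[ℝ] ℝ, (∀ x y, ω x y = -ω y x) →
      ((L : Set (V × Module.Dual ℝ V)) = {p | p.2 = ω p.1}) →
      ∀ α ∈ (horizSub L W).dualAnnihilator, ∀ w ∈ W, πV α (ω w) = α w) := by
  constructor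
  · constructor
    · intro hnondeg
      -- Step 1: L contains no nonzero (0, β)
      have hker0 : ∀ β : Module.Dual ℝ V, ((0 : V), β) ∈ L → β = 0 := by
        intro β h
        have hβH : β ∈ (horizSub L W).dualAnnihilator := by
          rw [Submodule.mem_dualAnnihilator]
          rintro Y ⟨γ, hγ, hYL⟩
          have := isoPair hL.1 h hYL
          simpa using this
        refine hnondeg β hβH ?_
        intro γ hγ
        obtain ⟨X, hXW, hXL⟩ := exists_W_pair hL hnd hγ
        rw [hπV β γ X hβH hγ hXW hXL]
        have := isoPair hL.1 h hXL
        simpa using this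
      obtain ⟨ω, hkey⟩ := exists_graph_map hL hker0
      refine ⟨ω, ?_, ?_, ?_⟩
      · intro x y
        have h := isoPair hL.1 (hkey x) (hkey y)
        have h' : ω x y + ω y x = 0 := h
        linarith
      · ext p
        simp only [SetLike.mem_coe, Set.mem_setOf_eq]
        constructor
        · intro hp
          have hd : ((0 : V), p.2 - ω p.1) ∈ L := by
            have hs := L.sub_mem hp (hkey p.1)
            have heq : (p - (p.1, ω p.1) : V × Module.Dual ℝ V)
                = ((0 : V), p.2 - ω p.1) := Prod.ext_iff.mpr ⟨by simp, rfl⟩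
            rwa [heq] at hs
          exact sub_eq_zero.mp (hker0 _ hd)
        · intro hp
          have hpe : p = ((p.1 : V), ω p.1) := Prod.ext_iff.mpr ⟨rfl, hp⟩
          rw [hpe]
          exact hkey p.1
      · intro w hw hvan
        have hωW : ω w ∈ W.dualAnnihilator := (Submodule.mem_dualAnnihilator (ω w)).mpr hvan
        have hm : ((w, ω w) : V × Module.Dual ℝ V) ∈ W.prod W.dualAnnihilator ⊓ L :=
          ⟨⟨hw, hωW⟩, hkey w⟩
        rw [hnd, Submodule.mem_bot] at hm
        exact congrArg Prod.fst hm
    · rintro ⟨ω, hskew, hgraph, -⟩ α hα hvan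
      have hαW : α ∈ W.dualAnnihilator := by
        rw [Submodule.mem_dualAnnihilator]
        intro w hw
        have h1 := omega_mem_annH hskew hgraph hw
        have h2 : ((w, ω w) : V × Module.Dual ℝ V) ∈ L := by
          rw [← SetLike.mem_coe, hgraph]
          exact rfl
        have h3 := hπV α (ω w) w hα h1 hw h2
        rw [← h3]
        exact hvan (ω w) h1
      exact eq_zero_of_ann_W_H hL hnd hαW hα
  · intro ω hskew hgraph α hα w hw
    have h1 := omega_mem_annH hskew hgraph hw
    have h2 : ((w, ω w) : V × Module.Dual ℝ V) ∈ L := by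
      rw [← SetLike.mem_coe, hgraph]
      exact rfl
    exact hπV α (ω w) w hα h1 hw h2
end
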